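/- Let n ≥ 1, let r₁, …, rₙ ∈ ℂ be pairwise distinct, let F(z) = ∏_{k=1}^{n} (z − rₖ) with coefficients c₀, …, cₙ (so F(z) = Σ_{j=0}^{n} c_j z^j, cₙ = 1), and let F'(rₖ) = ∏_{j≠k} (rₖ − r_j) denote the (nonzero) derivative of F at rₖ. Let f : ℝ → ℂ be continuous, and define y : ℝ → ℂ by y(x) := Σ_{k=1}^{n} (1/F'(rₖ))·e^{rₖ·x}·∫_0^x e^{−rₖ·t} f(t) dt. Then y is n-times differentiable on ℝ and Σ_{j=0}^{n} c_j·y^{(j)}(x) = f(x) for every x ∈ ℝ, i.e., y solves the differential equation F(D)y = f. -/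

import Mathlib

open Finset Polynomial

lemma cauchy_lagrange_aux (n : ℕ) (r : Fin n → ℂ) (hr : Function.Injective r)
    (i : ℕ) (hi : i < n) :
    ∑ k, (∏ j ∈ Finset.univ.erase k, (r k - r j))⁻¹ * r k ^ i =
      if i = n - 1 then 1 else 0 := by
  classical
  have hinj : Set.InjOn r ↑(Finset.univ : Finset (Fin n)) := hr.injOn
  have hcard : (Finset.univ : Finset (Fin n)).card = n := by simp
  have hdeg : (Polynomial.X ^ i : Polynomial ℂ).degree <
      (Finset.univ : Finset (Fin n)).card := by
    rw [Polynomial.degree_X_pow, hcard]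
    exact_mod_cast hi
  have h := Lagrange.eq_interpolate hinj hdeg
  have hb : ∀ k : Fin n, (Lagrange.basis Finset.univ r k).coeff (n - 1) =
      ∏ j ∈ Finset.univ.erase k, (r k - r j)⁻¹ := by
    intro k
    have hnd : (Lagrange.basis Finset.univ r k).natDegree = n - 1 := by
      rw [Lagrange.natDegree_basis hinj (Finset.mem_univ k), hcard]
    rw [← hnd]
    show (Lagrange.basis Finset.univ r k).leadingCoeff = _
    rw [Lagrange.basis, Polynomial.leadingCoeff_prod]
    refine Finset.prod_congr rfl fun j hj => ?_
    rw [Lagrange.basisDivisor, Polynomial.leadingCoeff_mul, Polynomial.leadingCoeff_C,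
      Polynomial.leadingCoeff_X_sub_C, mul_one]
  have hcoeff := congrArg (fun p => Polynomial.coeff p (n - 1)) h
  simp only [Lagrange.interpolate_apply, Polynomial.finset_sum_coeff,
    Polynomial.coeff_C_mul, Polynomial.eval_pow, Polynomial.eval_X,
    Polynomial.coeff_X_pow] at hcoeff
  rw [Finset.sum_congr rfl fun k _ => by rw [hb k]] at hcoeff
  have : ∑ k, (∏ j ∈ Finset.univ.erase k, (r k - r j))⁻¹ * r k ^ i =
      ∑ k : Fin n, r k ^ i * ∏ j ∈ Finset.univ.erase k, (r k - r j)⁻¹ := by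
    refine Finset.sum_congr rfl fun k _ => ?_
    rw [Finset.prod_inv_distrib, mul_comm]
  rw [this, ← hcoeff]
  by_cases hin : i = n - 1 <;> simp [hin]
  · omega

/-- Cauchy's representation formula: if the characteristic polynomial
F(z) = ∏ₖ (z − rₖ) = Σⱼ cⱼ zʲ has only simple roots, then
y(x) = Σₖ (1/F'(rₖ))·e^{rₖx}·∫₀ˣ e^{−rₖt} f(t) dt is n-times differentiable and
solves F(D)y = f. -/
theorem cauchy_representation (n : ℕ) (hn : 1 ≤ n) (r : Fin n → ℂ)
    (hr : Function.Injective r) (c : ℕ → ℂ) (hc : c n = 1)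
    (hF : ∀ z : ℂ, ∑ j ∈ Finset.range (n + 1), c j * z ^ j = ∏ k, (z - r k))
    (f : ℝ → ℂ) (hf : Continuous f) (y : ℝ → ℂ)
    (hy : ∀ x : ℝ, y x = ∑ k,
      (1 / ∏ j ∈ Finset.univ.erase k, (r k - r j)) *
        Complex.exp (r k * (x : ℂ)) *
        ∫ t in (0 : ℝ)..x, Complex.exp (-r k * (t : ℂ)) * f t) :
    (∀ i : ℕ, i < n → Differentiable ℝ (iteratedDeriv i y)) ∧
      ∀ x : ℝ, ∑ j ∈ Finset.range (n + 1), c j * iteratedDeriv j y x = f x := by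
  classical
  set a : Fin n → ℂ := fun k => (∏ j ∈ Finset.univ.erase k, (r k - r j))⁻¹ with ha
  set yk : Fin n → ℝ → ℂ := fun k x =>
    Complex.exp (r k * x) * ∫ t in (0 : ℝ)..x, Complex.exp (-r k * t) * f t with hykdef
  have hyk' : ∀ k x, HasDerivAt (yk k) (r k * yk k x + f x) x := by
    intro k x
    have hg : Continuous fun t : ℝ => Complex.exp (-r k * t) * f t :=
      ((Complex.continuous_exp.comp (continuous_const.mul Complex.continuous_ofReal)).mul hf)
    have hG : HasDerivAt (fun u : ℝ => ∫ t in (0 : ℝ)..u, Complex.exp (-r k * t) * f t)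
        (Complex.exp (-r k * x) * f x) x :=
      intervalIntegral.integral_hasDerivAt_right (hg.intervalIntegrable _ _)
        (hg.stronglyMeasurableAtFilter _ _) hg.continuousAt
    have hE : HasDerivAt (fun u : ℝ => Complex.exp (r k * u)) (r k * Complex.exp (r k * x)) x := by
      have h1 : HasDerivAt (fun u : ℝ => (u : ℂ)) 1 x := Complex.ofRealCLM.hasDerivAt
      have h2 := (h1.const_mul (r k)).cexp
      convert h2 using 1
      ring
    have hmul := hE.mul hG
    convert hmul using 1
    · rfl
    · rfl
    have hee : Complex.exp (r k * x) * Complex.exp (-r k * x) = 1 := by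
      rw [← Complex.exp_add]
      norm_num
    simp only [hykdef]
    calc r k * (Complex.exp (r k * x) * ∫ t in (0 : ℝ)..x, Complex.exp (-r k * t) * f t) + f x
        = r k * Complex.exp (r k * x) * (∫ t in (0 : ℝ)..x, Complex.exp (-r k * t) * f t) +
          (Complex.exp (r k * x) * Complex.exp (-r k * x)) * f x := by rw [hee]; ring
      _ = _ := by ring
  have hS : ∀ i, i < n → ∑ k, a k * r k ^ i = if i = n - 1 then 1 else 0 := by
    intro i hi
    exact cauchy_lagrange_aux n r hr i hi
  set g : ℕ → ℝ → ℂ := fun i x => ∑ k, a k * r k ^ i * yk k x with hgdef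
  have hgd : ∀ i x, HasDerivAt (g i) (g (i + 1) x + (∑ k, a k * r k ^ i) * f x) x := by
    intro i x
    have hsum : HasDerivAt (fun u => ∑ k, a k * r k ^ i * yk k u)
        (∑ k, a k * r k ^ i * (r k * yk k x + f x)) x :=
      HasDerivAt.fun_sum fun k _ => (hyk' k x).const_mul (a k * r k ^ i)
    have heq : ∑ k, a k * r k ^ i * (r k * yk k x + f x) =
        g (i + 1) x + (∑ k, a k * r k ^ i) * f x := by
      simp only [hgdef, Finset.sum_mul, ← Finset.sum_add_distrib]
      exact Finset.sum_congr rfl fun k _ => by ring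
    rw [← heq]
    exact hsum
  have key : ∀ i, i ≤ n - 1 → iteratedDeriv i y = g i := by
    intro i
    induction i with
    | zero =>
      intro _
      funext x
      rw [iteratedDeriv_zero, hy x]
      simp only [hgdef, ha, hykdef]
      exact Finset.sum_congr rfl fun k _ => by rw [one_div, pow_zero]; ring
    | succ i ih =>
      intro hi
      have hS0 : ∑ k, a k * r k ^ i = 0 := by
        rw [hS i (by omega), if_neg (by omega)]
      funext x
      rw [iteratedDeriv_succ, ih (by omega)]
      rw [(hgd i x).deriv, hS0, zero_mul, add_zero]
  constructor
  · intro i hi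
    rw [key i (by omega)]
    exact fun x => (hgd i x).differentiableAt
  · intro x
    have htop : iteratedDeriv n y x = g n x + f x := by
      have h1 : iteratedDeriv n y = deriv (g (n - 1)) := by
        conv_lhs => rw [show n = (n - 1) + 1 by omega, iteratedDeriv_succ]
        rw [key (n - 1) le_rfl]
      rw [h1, (hgd (n - 1) x).deriv, hS (n - 1) (by omega), if_pos rfl, one_mul,
        show n - 1 + 1 = n by omega]
    have hzero : ∑ j ∈ Finset.range (n + 1), c j * g j x = 0 := by
      have hcomm : ∑ j ∈ Finset.range (n + 1), c j * g j x =
          ∑ k, a k * (∑ j ∈ Finset.range (n + 1), c j * r k ^ j) * yk k x := by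
        simp only [hgdef, Finset.mul_sum, Finset.sum_mul]
        rw [Finset.sum_comm]
        exact Finset.sum_congr rfl fun k _ =>
          Finset.sum_congr rfl fun j _ => by ring
      rw [hcomm]
      refine Finset.sum_eq_zero fun k _ => ?_
      rw [hF (r k), Finset.prod_eq_zero (Finset.mem_univ k) (by simp), mul_zero, zero_mul]
    rw [Finset.sum_range_succ, hc, htop]
    rw [Finset.sum_range_succ, hc] at hzero
    have hmid : ∑ j ∈ Finset.range n, c j * iteratedDeriv j y x =
        ∑ j ∈ Finset.range n, c j * g j x :=
      Finset.sum_congr rfl fun j hj => by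
        rw [key j (by simp at hj; omega)]
    rw [hmid]
    linear_combination hzero
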